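/- Base-case path-length bound: let f be a uniformly random bijection from point IDs {1,…,n} to n positions on a cycle, let each of n^{1-ε} machines hold an arbitrary fixed set of at most n^{1-ε} IDs, and let κ = 32/ε (with n large enough that (2/n^ε)^κ ≤ 1/n^4). Then with probability at least 1 - 1/n^2, no machine's ID set contains κ IDs that are mapped to κ consecutive positions. -/

import Mathlib

open Real

open Nat

-- aux lemma 1: falling factorial ratio bound
lemma descFact_mul_pow_le (a n : ℕ) (h : a ≤ n) :
    ∀ m : ℕ, a.descFactorial m * n ^ m ≤ a ^ m * n.descFactorial m := by
  intro m
  induction m with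
  | zero => simp
  | succ m ih =>
    rw [Nat.descFactorial_succ, Nat.descFactorial_succ, pow_succ, pow_succ]
    calc (a - m) * a.descFactorial m * (n ^ m * n)
        = ((a - m) * n) * (a.descFactorial m * n ^ m) := by ring
      _ ≤ (a * (n - m)) * (a ^ m * n.descFactorial m) := by
          apply Nat.mul_le_mul _ ih
          rcases le_or_gt m a with hma | hma
          · have : (a - m) * n ≤ a * (n - m) := by
              rw [Nat.sub_mul, Nat.mul_sub]
              have h2 : a * m ≤ m * n := by
                rw [Nat.mul_comm]; exact Nat.mul_le_mul_left m h
              exact Nat.sub_le_sub_left h2 (a * n)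
            exact this
          · simp [Nat.sub_eq_zero_of_le hma.le]
      _ = a ^ m * a * ((n - m) * n.descFactorial m) := by ring

-- aux lemma 2: n! = descF n m * (n-m)!
lemma factorial_eq_descFactorial_mul (n : ℕ) :
    ∀ m : ℕ, m ≤ n → n ! = n.descFactorial m * (n - m)! := by
  intro m
  induction m with
  | zero => simp
  | succ m ih =>
    intro h
    have hm : m ≤ n := Nat.le_of_succ_le h
    rw [Nat.descFactorial_succ, ih hm]
    have h1 : n - m = (n - (m+1)) + 1 := by omega
    rw [h1, Nat.factorial_succ]
    have h2 : n - (m+1) + 1 = n - m := by omega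
    rw [h2]; ring

-- card of equivs with m prescribed values
lemma fiber_card_le {n m : ℕ} [NeZero n] (hmn : m ≤ n) (a : ZMod n) (g : Fin m ↪ Fin n) :
    (Finset.univ.filter (fun f : Fin n ≃ ZMod n =>
        ∀ j : Fin m, f (g j) = a + ((j : ℕ) : ZMod n))).card ≤ (n - m)! := by
  classical
  set P : (Fin n ≃ ZMod n) → Prop :=
    fun f => ∀ j : Fin m, f (g j) = a + ((j : ℕ) : ZMod n) with hP
  have hcard : (Finset.univ.filter P).card = Fintype.card {f : Fin n ≃ ZMod n // P f} :=
    (Fintype.card_subtype P).symm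
  rw [hcard]
  have key : ∀ f : Fin n ≃ ZMod n, P f →
      ∀ x : Fin n, (x ∉ Set.range g ↔ ∀ j : Fin m, f x ≠ a + ((j:ℕ):ZMod n)) := by
    intro f hf x
    constructor
    · intro hx j hfx
      exact hx ⟨j, f.injective (by rw [hf j, hfx])⟩
    · rintro hx ⟨j, rfl⟩
      exact hx j (hf j)
  set Ψ : {f : Fin n ≃ ZMod n // P f} →
      ({x : Fin n // x ∉ Set.range g} ≃ {y : ZMod n // ∀ j : Fin m, y ≠ a + ((j:ℕ):ZMod n)}) :=
    fun fp => Equiv.subtypeEquiv fp.1 (key fp.1 fp.2) with hΨ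
  have hinj : Function.Injective Ψ := by
    rintro ⟨f, hf⟩ ⟨f', hf'⟩ h
    ext x
    by_cases hx : x ∈ Set.range g
    · obtain ⟨j, rfl⟩ := hx
      rw [hf j, hf' j]
    · have := congrArg (fun e => (e ⟨x, hx⟩ : {y : ZMod n // ∀ j : Fin m, y ≠ a + ((j:ℕ):ZMod n)}).1) h
      simpa [hΨ, Equiv.subtypeEquiv] using this
  have hle := Fintype.card_le_of_injective Ψ hinj
  refine hle.trans ?_
  rcases isEmpty_or_nonempty
      ({x : Fin n // x ∉ Set.range g} ≃ {y : ZMod n // ∀ j : Fin m, y ≠ a + ((j:ℕ):ZMod n)}) with he | hne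
  · rw [Fintype.card_eq_zero]; exact Nat.zero_le _
  · obtain ⟨e⟩ := hne
    rw [Fintype.card_equiv e]
    have hrange : Fintype.card {x : Fin n // x ∈ Set.range g} = m := by
      rw [Fintype.card_congr (Equiv.ofInjective g g.injective).symm, Fintype.card_fin]
    have : Fintype.card {x : Fin n // x ∉ Set.range g} = n - m := by
      rw [Fintype.card_subtype_compl, Fintype.card_fin, hrange]
    rw [this]

-- card of embeddings into a finset
lemma embed_card_le {n m : ℕ} (S : Finset (Fin n)) :
    (Finset.univ.filter (fun g : Fin m ↪ Fin n => ∀ j, g j ∈ S)).card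
      ≤ S.card.descFactorial m := by
  classical
  rw [← Fintype.card_subtype]
  have h : Fintype.card {g : Fin m ↪ Fin n // ∀ j, g j ∈ S} ≤ Fintype.card (Fin m ↪ ↥S) := by
    apply Fintype.card_le_of_injective
      (fun gp => ⟨fun j => ⟨gp.1 j, gp.2 j⟩,
        fun j j' hjj => gp.1.injective (congrArg Subtype.val hjj)⟩)
    rintro ⟨g, hg⟩ ⟨g', hg'⟩ h
    ext j
    have := congrFun (congrArg (fun (e : Fin m ↪ ↥S) => (e : Fin m → ↥S)) h) j
    exact congrArg Fin.val (by exact congrArg Subtype.val this)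
  rwa [Fintype.card_embedding_eq, Fintype.card_coe, Fintype.card_fin] at h

lemma count_bad {n κ : ℕ} [NeZero n] (S : Finset (Fin n)) (a : ZMod n) :
    (Finset.univ.filter (fun f : Fin n ≃ ZMod n =>
        ∀ j ∈ Finset.range κ, ∃ x ∈ S, f x = a + (j : ZMod n))).card
      ≤ S.card.descFactorial (min κ n) * (n - min κ n)! := by
  classical
  set m := min κ n with hm
  have hmn : m ≤ n := min_le_right _ _
  have hmκ : m ≤ κ := min_le_left _ _
  set Bad : Finset (Fin n ≃ ZMod n) := Finset.univ.filter (fun f =>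
    ∀ j ∈ Finset.range κ, ∃ x ∈ S, f x = a + (j : ZMod n)) with hBad
  set T : Finset (Fin m ↪ Fin n) := Finset.univ.filter (fun g => ∀ j, g j ∈ S) with hT
  set fiber : (Fin m ↪ Fin n) → Finset (Fin n ≃ ZMod n) :=
    fun g => Finset.univ.filter (fun f => ∀ j : Fin m, f (g j) = a + ((j:ℕ) : ZMod n))
    with hfib
  have hsub : Bad ⊆ T.biUnion fiber := by
    intro f hf
    rw [hBad, Finset.mem_filter] at hf
    have hf' := hf.2
    have hcastinj : ∀ j j' : Fin m, a + ((j:ℕ) : ZMod n) = a + ((j':ℕ) : ZMod n) → j = j' := by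
      intro j j' h
      have h2 : (((j:ℕ)) : ZMod n) = (((j':ℕ)) : ZMod n) := add_left_cancel h
      have h3 := congrArg ZMod.val h2
      rwa [ZMod.val_cast_of_lt (lt_of_lt_of_le j.2 hmn),
        ZMod.val_cast_of_lt (lt_of_lt_of_le j'.2 hmn), ← Fin.ext_iff] at h3
    refine Finset.mem_biUnion.mpr ?_
    refine ⟨⟨fun j => f.symm (a + ((j:ℕ) : ZMod n)), ?_⟩, ?_, ?_⟩
    · intro j j' h
      exact hcastinj j j' (f.symm.injective h)
    · rw [hT, Finset.mem_filter]
      refine ⟨Finset.mem_univ _, fun j => ?_⟩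
      obtain ⟨x, hxS, hfx⟩ := hf' (j:ℕ) (Finset.mem_range.mpr (lt_of_lt_of_le j.2 hmκ))
      have hx : f.symm (a + ((j:ℕ) : ZMod n)) = x := by rw [← hfx, Equiv.symm_apply_apply]
      show f.symm (a + ((j:ℕ) : ZMod n)) ∈ S; rw [hx]; exact hxS
    · rw [hfib, Finset.mem_filter]
      exact ⟨Finset.mem_univ _, fun j => f.apply_symm_apply _⟩
  calc Bad.card ≤ (T.biUnion fiber).card := Finset.card_le_card hsub
    _ ≤ ∑ g ∈ T, (fiber g).card := Finset.card_biUnion_le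
    _ ≤ ∑ g ∈ T, (n - m)! := Finset.sum_le_sum (fun g _ => fiber_card_le hmn a g)
    _ = T.card * (n - m)! := by rw [Finset.sum_const, smul_eq_mul]
    _ ≤ S.card.descFactorial m * (n - m)! := Nat.mul_le_mul_right _ (embed_card_le S)

/-- base-case path-length bound: let `f` be a uniformly random bijection
from the `n` point IDs to `n` positions in cyclic order, let each of at most `n^{1-ε}`
machines `i` hold a fixed set `A i` of at most `n^{1-ε}` IDs, and let `κ = 32/ε`, with
`n` large enough that `(2/n^ε)^κ ≤ 1/n^4`.  Then with probability at least `1 - 1/n²`,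
no machine's ID set contains `κ` IDs that are mapped to `κ` consecutive positions. -/
theorem stmt15 {ι : Type*} (ε : ℝ) (hε0 : 0 < ε) (hε1 : ε < 1)
    (n κ : ℕ) [NeZero n] (hκ : (κ : ℝ) = 32 / ε)
    (machines : Finset ι) (A : ι → Finset (Fin n))
    (hmach : (machines.card : ℝ) ≤ (n : ℝ) ^ ((1 : ℝ) - ε))
    (hA : ∀ i ∈ machines, ((A i).card : ℝ) ≤ (n : ℝ) ^ ((1 : ℝ) - ε))
    (hlarge : (2 / (n : ℝ) ^ ε) ^ κ ≤ 1 / (n : ℝ) ^ (4 : ℕ)) :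
    (1 : ℝ) - 1 / (n : ℝ) ^ 2 ≤
      ((Finset.univ.filter (fun f : Fin n ≃ ZMod n =>
          ¬ ∃ i ∈ machines, ∃ a : ZMod n,
            ∀ j ∈ Finset.range κ, ∃ x ∈ A i, f x = a + (j : ZMod n))).card : ℝ)
        / (Nat.factorial n : ℝ) := by
  classical
  have hn0 : 0 < n := Nat.pos_of_ne_zero (NeZero.ne n)
  have hκR : (32:ℝ) ≤ (κ:ℝ) := by
    rw [hκ, le_div_iff₀ hε0]; nlinarith
  have hκpos : 0 < κ := by
    by_contra h
    have : κ = 0 := by omega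
    rw [this] at hκR; norm_num at hκR
  have hn2 : 2 ≤ n := by
    by_contra hcon
    have hn1 : n = 1 := by omega
    subst hn1
    norm_num [Real.one_rpow] at hlarge
    have h2 : (2:ℝ)^1 ≤ (2:ℝ)^κ := pow_le_pow_right₀ (by norm_num) hκpos
    norm_num at h2; linarith
  have hnR1 : (1:ℝ) < (n:ℝ) := by exact_mod_cast hn2.trans_lt' (by norm_num)
  have hnposR : (0:ℝ) < (n:ℝ) := by positivity
  have hfacpos : (0:ℝ) < (n ! : ℝ) := by exact_mod_cast n.factorial_pos
  have hn4pos : (0:ℝ) < (n:ℝ)^(4:ℕ) := by positivity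
  set m := min κ n with hm
  have hmn : m ≤ n := min_le_right _ _
  -- per-machine real bound
  have term_le : ∀ i ∈ machines,
      (((A i).card.descFactorial m * (n - m)! : ℕ) : ℝ) ≤ (n ! : ℝ) / (n:ℝ)^(4:ℕ) := by
    intro i hi
    have hAn : ((A i).card:ℝ) ≤ (n : ℝ) ^ ((1 : ℝ) - ε) := hA i hi
    rcases le_or_gt κ n with hκn | hκn
    · have hmκ : m = κ := min_eq_left hκn
      rw [hmκ]
      have hcardle : (A i).card ≤ n := by
        simpa using Finset.card_le_univ (A i)
      have hnat := descFact_mul_pow_le (A i).card n hcardle κ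
      have hnκpos : (0:ℝ) < (n:ℝ)^κ := by positivity
      have hratio : ((A i).card.descFactorial κ : ℝ) ≤
          (((A i).card:ℝ)/(n:ℝ))^κ * (n.descFactorial κ : ℝ) := by
        rw [div_pow, div_mul_eq_mul_div, le_div_iff₀ hnκpos]
        exact_mod_cast hnat
      have hεpow : (0:ℝ) < (n:ℝ)^ε := Real.rpow_pos_of_pos hnposR ε
      have hfrac : ((A i).card:ℝ)/(n:ℝ) ≤ 2/(n:ℝ)^ε := by
        rw [div_le_div_iff₀ hnposR hεpow]
        have h1 : ((A i).card:ℝ) * (n:ℝ)^ε ≤ (n:ℝ)^((1:ℝ)-ε) * (n:ℝ)^ε :=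
          mul_le_mul_of_nonneg_right hAn hεpow.le
        rw [← Real.rpow_add hnposR] at h1
        norm_num at h1
        linarith
      have hpow : (((A i).card:ℝ)/(n:ℝ))^κ ≤ (2/(n:ℝ)^ε)^κ :=
        pow_le_pow_left₀ (by positivity) hfrac κ
      have hdesc : ((A i).card.descFactorial κ : ℝ) ≤
          (1/(n:ℝ)^(4:ℕ)) * (n.descFactorial κ : ℝ) := by
        refine hratio.trans ?_
        apply mul_le_mul_of_nonneg_right (hpow.trans hlarge)
        positivity
      have hfact : (n ! : ℝ) = (n.descFactorial κ : ℝ) * ((n - κ)! : ℝ) := by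
        exact_mod_cast congrArg (Nat.cast : ℕ → ℝ) (factorial_eq_descFactorial_mul n κ hκn)
      push_cast
      rw [hfact]
      calc ((A i).card.descFactorial κ : ℝ) * ((n - κ)! : ℝ)
          ≤ ((1/(n:ℝ)^(4:ℕ)) * (n.descFactorial κ : ℝ)) * ((n - κ)! : ℝ) := by
            apply mul_le_mul_of_nonneg_right hdesc (by positivity)
        _ = (n.descFactorial κ : ℝ) * ((n - κ)! : ℝ) / (n:ℝ)^(4:ℕ) := by ring
    · have hmn' : m = n := min_eq_right hκn.le
      have hlt : (A i).card < n := by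
        have hr : ((A i).card:ℝ) < (n:ℝ) := by
          refine lt_of_le_of_lt hAn ?_
          calc (n:ℝ)^((1:ℝ)-ε) < (n:ℝ)^(1:ℝ) :=
              Real.rpow_lt_rpow_of_exponent_lt hnR1 (by linarith)
            _ = (n:ℝ) := Real.rpow_one _
        exact_mod_cast hr
      rw [hmn', Nat.descFactorial_eq_zero_iff_lt.mpr hlt]
      simp
      positivity
  -- union bound
  have hBnat : (Finset.univ.filter (fun f : Fin n ≃ ZMod n => ∃ i ∈ machines, ∃ a : ZMod n,
        ∀ j ∈ Finset.range κ, ∃ x ∈ A i, f x = a + (j : ZMod n))).card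
      ≤ ∑ i ∈ machines, ∑ a : ZMod n, ((A i).card.descFactorial m * (n-m)!) := by
    have hBsub : (Finset.univ.filter (fun f : Fin n ≃ ZMod n => ∃ i ∈ machines, ∃ a : ZMod n,
          ∀ j ∈ Finset.range κ, ∃ x ∈ A i, f x = a + (j : ZMod n)))
        ⊆ machines.biUnion (fun i => (Finset.univ : Finset (ZMod n)).biUnion
            (fun a => Finset.univ.filter (fun f : Fin n ≃ ZMod n =>
              ∀ j ∈ Finset.range κ, ∃ x ∈ A i, f x = a + (j : ZMod n)))) := by
      intro f hf
      simp only [Finset.mem_filter, Finset.mem_univ, true_and] at hf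
      obtain ⟨i, hi, a, h⟩ := hf
      simp only [Finset.mem_biUnion, Finset.mem_filter, Finset.mem_univ, true_and]
      exact ⟨i, hi, a, h⟩
    refine (Finset.card_le_card hBsub).trans ?_
    refine Finset.card_biUnion_le.trans (Finset.sum_le_sum fun i hi => ?_)
    refine Finset.card_biUnion_le.trans (Finset.sum_le_sum fun a _ => ?_)
    exact count_bad (A i) a
  have hBreal : ((Finset.univ.filter (fun f : Fin n ≃ ZMod n => ∃ i ∈ machines, ∃ a : ZMod n,
        ∀ j ∈ Finset.range κ, ∃ x ∈ A i, f x = a + (j : ZMod n))).card : ℝ)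
      ≤ (n ! : ℝ)/(n:ℝ)^2 := by
    calc ((Finset.univ.filter (fun f : Fin n ≃ ZMod n => ∃ i ∈ machines, ∃ a : ZMod n,
          ∀ j ∈ Finset.range κ, ∃ x ∈ A i, f x = a + (j : ZMod n))).card : ℝ)
        ≤ ∑ i ∈ machines, ∑ a : ZMod n, (((A i).card.descFactorial m * (n-m)! : ℕ) : ℝ) := by
          exact_mod_cast hBnat
      _ ≤ ∑ i ∈ machines, ∑ _a : ZMod n, (n ! : ℝ)/(n:ℝ)^(4:ℕ) :=
          Finset.sum_le_sum fun i hi => Finset.sum_le_sum fun a _ => term_le i hi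
      _ = (machines.card : ℝ) * ((n:ℝ) * ((n ! : ℝ)/(n:ℝ)^(4:ℕ))) := by
          simp [Finset.sum_const, ZMod.card]
      _ ≤ (n:ℝ)^((1:ℝ)-ε) * ((n:ℝ) * ((n ! : ℝ)/(n:ℝ)^(4:ℕ))) := by
          apply mul_le_mul_of_nonneg_right hmach
          positivity
      _ ≤ (n:ℝ) * ((n:ℝ) * ((n ! : ℝ)/(n:ℝ)^(4:ℕ))) := by
          have h1 : (n:ℝ)^((1:ℝ)-ε) ≤ (n:ℝ) := by
            have := Real.rpow_le_rpow_of_exponent_le hnR1.le (by linarith : (1:ℝ)-ε ≤ 1)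
            rwa [Real.rpow_one] at this
          apply mul_le_mul_of_nonneg_right h1
          positivity
      _ = (n ! : ℝ)/(n:ℝ)^2 := by
          field_simp
  -- final
  have hsplit := Finset.card_filter_add_card_filter_not
    (s := (Finset.univ : Finset (Fin n ≃ ZMod n)))
    (p := fun f : Fin n ≃ ZMod n => ∃ i ∈ machines, ∃ a : ZMod n,
      ∀ j ∈ Finset.range κ, ∃ x ∈ A i, f x = a + (j : ZMod n))
  have huniv : (Finset.univ : Finset (Fin n ≃ ZMod n)).card = n ! := by
    rw [Finset.card_univ,
      Fintype.card_equiv (Fintype.equivOfCardEq (by simp [ZMod.card]) : Fin n ≃ ZMod n)]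
    simp
  rw [huniv] at hsplit
  have hgood : ((Finset.univ.filter (fun f : Fin n ≃ ZMod n =>
      ¬ ∃ i ∈ machines, ∃ a : ZMod n,
        ∀ j ∈ Finset.range κ, ∃ x ∈ A i, f x = a + (j : ZMod n))).card : ℝ)
      = (n ! : ℝ) - ((Finset.univ.filter (fun f : Fin n ≃ ZMod n => ∃ i ∈ machines, ∃ a : ZMod n,
        ∀ j ∈ Finset.range κ, ∃ x ∈ A i, f x = a + (j : ZMod n))).card : ℝ) := by
    have := congrArg (Nat.cast : ℕ → ℝ) hsplit
    push_cast at this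
    linarith
  rw [hgood, le_div_iff₀ hfacpos]
  have hn2pos : (0:ℝ) < (n:ℝ)^2 := by positivity
  have : (1 - 1/(n:ℝ)^2) * (n ! : ℝ) = (n ! : ℝ) - (n ! : ℝ)/(n:ℝ)^2 := by
    field_simp
  rw [this]
  linarith
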